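/- Let A be symmetric positive definite, B symmetric positive semidefinite with B ⪯ A, and λ > 0. Then the matrix D := (I − (A+λI)^{-1/2} B (A+λI)^{-1/2})^{-1} − I is well-defined (the inverse exists) and has eigenvalues bounded between 0 and σ/λ, where σ is the largest eigenvalue of A. -/

import Mathlib

open Matrix

section OldSqrt

open scoped ComplexOrder

/-- The positive semidefinite square root of a positive semidefinite matrix, as defined in
the older Mathlib (removed since). -/
noncomputable def Matrix.PosSemidef.sqrt {n : Type*} [Fintype n] [DecidableEq n] {𝕜 : Type*}
    [RCLike 𝕜] {A : Matrix n n 𝕜} (hA : A.PosSemidef) : Matrix n n 𝕜 :=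
  hA.1.eigenvectorUnitary.1 * diagonal ((↑) ∘ (fun x => Real.sqrt x) ∘ hA.1.eigenvalues) *
    (star hA.1.eigenvectorUnitary : Matrix n n 𝕜)

end OldSqrt

private lemma psd_smul {d : ℕ} {X : Matrix (Fin d) (Fin d) ℝ} (hX : X.PosSemidef)
    {c : ℝ} (hc : 0 ≤ c) : (c • X).PosSemidef := by
  refine ⟨?_, fun x => ?_⟩
  · rw [Matrix.IsHermitian, conjTranspose_smul, hX.1.eq]; simp
  · exact (hX.smul hc).2 x

private lemma pd_smul_one {d : ℕ} {c : ℝ} (hc : 0 < c) :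
    (c • (1 : Matrix (Fin d) (Fin d) ℝ)).PosDef := by
  rw [smul_one_eq_diagonal]
  exact .diagonal fun _ => hc

/-- With `A ≻ 0` symmetric, `0 ⪯ B ⪯ A`, `λ > 0`, the matrix
`D := (I − (A+λI)⁻¹ᐟ² B (A+λI)⁻¹ᐟ²)⁻¹ − I` is well-defined (the inverse exists) and has
eigenvalues in `[0, σ/λ]`, where `σ` is the largest eigenvalue of `A`. -/
theorem stmt1 (d : ℕ) (A B : Matrix (Fin d) (Fin d) ℝ) (l σ : ℝ)
    (hA : A.PosDef) (hB : B.PosSemidef) (hAB : (A - B).PosSemidef)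
    (hl : 0 < l)
    (hP : (A + l • (1 : Matrix (Fin d) (Fin d) ℝ)).PosSemidef)
    (hσ_mem : σ ∈ spectrum ℝ A) (hσ_max : ∀ μ ∈ spectrum ℝ A, μ ≤ σ) :
    IsUnit (1 - hP.sqrt⁻¹ * B * hP.sqrt⁻¹) ∧
      ∀ μ ∈ spectrum ℝ ((1 - hP.sqrt⁻¹ * B * hP.sqrt⁻¹)⁻¹ - 1),
        μ ∈ Set.Icc (0 : ℝ) (σ / l) := by
  set P : Matrix (Fin d) (Fin d) ℝ := A + l • 1 with hPdef
  set S : Matrix (Fin d) (Fin d) ℝ := hP.sqrt with hSdef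
  have hS_psd : S.PosSemidef := by
    show hP.sqrt.PosSemidef
    unfold Matrix.PosSemidef.sqrt
    rw [star_eq_conjTranspose]
    exact (PosSemidef.diagonal (Pi.le_def.mpr fun i => by simp [Real.sqrt_nonneg])).mul_mul_conjTranspose_same _
  have hSS : S * S = P := by
    have hspec := hP.1.spectral_theorem
    rw [Unitary.conjStarAlgAut_apply] at hspec
    show hP.sqrt * hP.sqrt = P
    conv_rhs => rw [hspec]
    unfold Matrix.PosSemidef.sqrt
    have key := Unitary.coe_star_mul_self hP.1.eigenvectorUnitary
    simp only [Matrix.mul_assoc]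
    rw [← Matrix.mul_assoc (star hP.1.eigenvectorUnitary : Matrix (Fin d) (Fin d) ℝ), key,
      Matrix.one_mul, ← Matrix.mul_assoc (diagonal _) (diagonal _), diagonal_mul_diagonal]
    congr 3
    funext i
    simp [Real.mul_self_sqrt (hP.eigenvalues_nonneg i)]
  have hPd : P.PosDef := hA.add_posSemidef (pd_smul_one hl).posSemidef
  -- σ is positive
  have hσ_pos : 0 < σ := by
    rw [hA.1.spectrum_real_eq_range_eigenvalues] at hσ_mem
    obtain ⟨i, hi⟩ := hσ_mem
    exact hi ▸ hA.eigenvalues_pos i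
  have hσl : 0 < σ + l := by linarith
  -- S is invertible
  have hSdet : IsUnit S.det := by
    have h2 : S.det * S.det = P.det := by rw [← det_mul, hSS]
    have := hPd.det_pos
    refine isUnit_iff_ne_zero.mpr fun h => ?_
    rw [h, mul_zero] at h2
    exact hPd.det_pos.ne h2
  have hmul1 : S * S⁻¹ = 1 := mul_nonsing_inv _ hSdet
  have hmul2 : S⁻¹ * S = 1 := nonsing_inv_mul _ hSdet
  have hSinvH : (S⁻¹)ᴴ = S⁻¹ := hS_psd.1.inv.eq
  have hSinv_unit : IsUnit S⁻¹ := Matrix.isUnit_nonsing_inv_iff.mpr ((Matrix.isUnit_iff_isUnit_det S).mpr hSdet)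
  have hkey : S⁻¹ * P * S⁻¹ = 1 := by
    rw [← hSS, ← Matrix.mul_assoc, Matrix.mul_assoc (S⁻¹ * S), hmul2, hmul1, Matrix.one_mul]
  set M : Matrix (Fin d) (Fin d) ℝ := 1 - S⁻¹ * B * S⁻¹ with hMdef
  -- conjugation identity for any real t
  have hconj : ∀ t : ℝ, M - t • 1 = S⁻¹ * ((P - B) - t • P) * S⁻¹ := by
    intro t
    rw [Matrix.mul_sub, Matrix.sub_mul, Matrix.mul_sub, Matrix.sub_mul,
      mul_smul_comm, smul_mul_assoc, hkey, hMdef]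
  -- σ • 1 - A is positive semidefinite
  have hσA_herm : (σ • (1 : Matrix (Fin d) (Fin d) ℝ) - A).IsHermitian := by
    rw [Matrix.IsHermitian, conjTranspose_sub, conjTranspose_smul, hA.1.eq]
    simp
  have hσA : (σ • (1 : Matrix (Fin d) (Fin d) ℝ) - A).PosSemidef := by
    refine hσA_herm.posSemidef_iff_eigenvalues_nonneg.mpr (Pi.le_def.mpr fun i => show (0:ℝ) ≤ hσA_herm.eigenvalues i from ?_)
    have hmem := hσA_herm.eigenvalues_mem_spectrum_real i
    set ν := hσA_herm.eigenvalues i with hν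
    have : σ - ν ∈ spectrum ℝ A := by
      rw [spectrum.mem_iff] at hmem ⊢
      rw [Algebra.algebraMap_eq_smul_one] at hmem ⊢
      have heq : (σ - ν) • (1 : Matrix (Fin d) (Fin d) ℝ) - A =
          -(ν • 1 - (σ • 1 - A)) := by
        rw [sub_smul]; abel
      rw [heq, IsUnit.neg_iff]
      exact hmem
    have := hσ_max _ this
    linarith
  -- middle-matrix decomposition, no division
  have hmid : ∀ t : ℝ, (P - B) - t • P =
      (A - B) + ((l - t * (σ + l)) • (1 : Matrix (Fin d) (Fin d) ℝ) +
        t • (σ • (1 : Matrix (Fin d) (Fin d) ℝ) - A)) := by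
    intro t
    rw [hPdef]
    module
  -- key posdef facts
  have hmid_pd : ∀ t : ℝ, 0 ≤ t → t * (σ + l) < l → ((P - B) - t • P).PosDef := by
    intro t ht htl
    rw [hmid t]
    refine Matrix.PosDef.posSemidef_add hAB ?_
    exact (pd_smul_one (by linarith)).add_posSemidef (psd_smul hσA ht)
  -- M is a unit
  have hM_unit : IsUnit M := by
    have h0 : ((P - B) - (0:ℝ) • P).PosDef := hmid_pd 0 le_rfl (by simpa using hl)
    have := hconj 0
    simp only [zero_smul, sub_zero] at this h0
    rw [this]
    exact (hSinv_unit.mul h0.isUnit).mul hSinv_unit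
  refine ⟨hM_unit, ?_⟩
  intro μ hμ
  have hMdet : IsUnit M.det := (Matrix.isUnit_iff_isUnit_det M).mp hM_unit
  have hMinv_unit : IsUnit M⁻¹ := Matrix.isUnit_nonsing_inv_iff.mpr hM_unit
  set ν : ℝ := μ + 1 with hνdef
  have h1 : ¬ IsUnit (ν • (1 : Matrix (Fin d) (Fin d) ℝ) - M⁻¹) := by
    rw [spectrum.mem_iff, Algebra.algebraMap_eq_smul_one] at hμ
    have heq : μ • (1 : Matrix (Fin d) (Fin d) ℝ) - (M⁻¹ - 1) = ν • 1 - M⁻¹ := by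
      rw [hνdef, add_smul, one_smul]; abel
    rwa [heq] at hμ
  have hν0 : ν ≠ 0 := by
    intro h
    apply h1
    rw [h, zero_smul, zero_sub, IsUnit.neg_iff]
    exact hMinv_unit
  set τ : ℝ := ν⁻¹ with hτdef
  have hτν : τ * ν = 1 := inv_mul_cancel₀ hν0
  have hτ : ¬ IsUnit (τ • (1 : Matrix (Fin d) (Fin d) ℝ) - M) := by
    intro hu
    apply h1
    have hident : ν • (1 : Matrix (Fin d) (Fin d) ℝ) - M⁻¹ =
        (-ν) • (M⁻¹ * (τ • 1 - M)) := by
      rw [Matrix.mul_sub, mul_smul_comm, Matrix.mul_one, nonsing_inv_mul _ hMdet,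
        smul_sub, smul_smul]
      have hh : -ν * τ = -1 := by
        have := hτν
        field_simp
        linarith [hτν, mul_comm τ ν]
      rw [hh]
      module
    have hsmul_unit : IsUnit ((-ν) • (1 : Matrix (Fin d) (Fin d) ℝ)) := by
      rw [Matrix.isUnit_iff_isUnit_det, det_smul, det_one, mul_one]
      exact isUnit_iff_ne_zero.mpr (pow_ne_zero _ (neg_ne_zero.mpr hν0))
    rw [hident]
    have hrw : (-ν) • (M⁻¹ * (τ • 1 - M)) = ((-ν) • 1) * (M⁻¹ * (τ • 1 - M)) := by
      rw [smul_mul_assoc, Matrix.one_mul]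
    rw [hrw]
    exact hsmul_unit.mul (hMinv_unit.mul hu)
  -- upper bound τ ≤ 1
  have h1M : (1 - M).PosSemidef := by
    have hr : (1 : Matrix (Fin d) (Fin d) ℝ) - M = S⁻¹ * B * S⁻¹ := by
      rw [hMdef, sub_sub_cancel]
    rw [hr]
    have := hB.mul_mul_conjTranspose_same S⁻¹
    rwa [hSinvH] at this
  have hτ_le_one : τ ≤ 1 := by
    by_contra h
    push_neg at h
    apply hτ
    have hr : τ • (1 : Matrix (Fin d) (Fin d) ℝ) - M = (τ - 1) • 1 + (1 - M) := by
      module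
    rw [hr]
    exact ((pd_smul_one (by linarith)).add_posSemidef h1M).isUnit
  -- lower bound l/(σ+l) ≤ τ
  have hτ_ge : l / (σ + l) ≤ τ := by
    by_contra h
    push_neg at h
    apply hτ
    have hcase : IsUnit (M - τ • (1 : Matrix (Fin d) (Fin d) ℝ)) := by
      rcases le_or_gt 0 τ with h0 | h0
      · rw [hconj τ]
        have hpd := hmid_pd τ h0 ((lt_div_iff₀ hσl).mp h)
        exact (hSinv_unit.mul hpd.isUnit).mul hSinv_unit
      · have hMpsd : M.PosSemidef := by
          have h00 : ((P - B) - (0:ℝ) • P).PosDef := hmid_pd 0 le_rfl (by simpa using hl)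
          have hc0 := hconj 0
          simp only [zero_smul, sub_zero] at hc0 h00
          rw [hc0]
          have := h00.posSemidef.mul_mul_conjTranspose_same S⁻¹
          rwa [hSinvH] at this
        have hr : M - τ • (1 : Matrix (Fin d) (Fin d) ℝ) = M + (-τ) • 1 := by
          module
        rw [hr]
        exact (Matrix.PosDef.posSemidef_add hMpsd (pd_smul_one (by linarith))).isUnit
    have hr : τ • (1 : Matrix (Fin d) (Fin d) ℝ) - M = -(M - τ • 1) := by
      rw [neg_sub]
    rw [hr, IsUnit.neg_iff]
    exact hcase
  -- conclude
  have hc_pos : 0 < l / (σ + l) := div_pos hl hσl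
  have hτ_pos : 0 < τ := lt_of_lt_of_le hc_pos hτ_ge
  have hν_pos : 0 < ν := by nlinarith [hτν]
  have hμν : μ = ν - 1 := by rw [hνdef]; ring
  rw [Set.mem_Icc]
  constructor
  · nlinarith [mul_nonneg hν_pos.le (sub_nonneg.mpr hτ_le_one)]
  · rw [le_div_iff₀ hl]
    nlinarith [mul_le_mul_of_nonneg_left ((div_le_iff₀ hσl).mp hτ_ge) hν_pos.le]
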